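/- arXiv:2601.19220 — 6 statements merged into one kernel-verified Lean document; each statement's English description precedes it below -/
import Mathlib

section
/- Let f : H → ℝ be a convex differentiable function on a real Hilbert space H with a minimizer x*. Let x : [0,∞) → H be a C² curve satisfying the ODE ẍ(t) + (α/t)ẋ(t) + ∇f(x(t)) = 0 for t > 0 with α ≥ 3 and ẋ(0) = 0. Then for all t > 0, f(x(t)) - f(x*) ≤ (α-1)‖x(0) - x*‖² / t². -/
open scoped RealInnerProductSpace

theorem stmt_3 {H : Type*} [NormedAddCommGroup H] [InnerProductSpace ℝ H] [CompleteSpace H]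
    (f : H → ℝ) (f' : H → H)
    (hgrad : ∀ y, HasGradientAt f (f' y) y)
    (hconv : ∀ y z : H, f y + ⟪f' y, z - y⟫ ≤ f z)
    (xstar : H) (hmin : ∀ y, f xstar ≤ f y)
    (α : ℝ) (hα : 3 ≤ α)
    (x : ℝ → H) (hx : ContDiff ℝ 2 x)
    (hode : ∀ t > (0 : ℝ), deriv (deriv x) t + (α / t) • deriv x t + f' (x t) = 0)
    (hv0 : deriv x 0 = 0) :
    ∀ t > (0 : ℝ), f (x t) - f xstar ≤ (α - 1) * ‖x 0 - xstar‖ ^ 2 / t ^ 2 := by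
  have hx2 := contDiff_succ_iff_deriv.mp (hx.of_le (by norm_num) : ContDiff ℝ (1 + 1) x)
  have hxd : Differentiable ℝ x := hx2.1
  have hvC1 : ContDiff ℝ 1 (deriv x) := hx2.2.2
  have hvd : Differentiable ℝ (deriv x) := hvC1.differentiable one_ne_zero
  set v := deriv x with hv
  set a := deriv v with ha
  -- Lyapunov functional
  set g : ℝ → H := fun t => (2 : ℝ) • (x t - xstar) + t • v t with hg
  set E : ℝ → ℝ := fun t =>
    t ^ 2 * (f (x t) - f xstar) + (1 / 2) * ⟪g t, g t⟫ + (α - 3) * ⟪x t - xstar, x t - xstar⟫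
    with hE
  -- derivative of E
  have hxt : ∀ t, HasDerivAt x (v t) t := fun t => (hxd t).hasDerivAt
  have hvt : ∀ t, HasDerivAt v (a t) t := fun t => (hvd t).hasDerivAt
  have hgt : ∀ t, HasDerivAt g ((2 : ℝ) • v t + (t • a t + (1 : ℝ) • v t)) t := by
    intro t
    exact (((hxt t).sub_const xstar).const_smul (2:ℝ)).add ((hasDerivAt_id t).smul (hvt t))
  have hft : ∀ t, HasDerivAt (fun s => f (x s)) ⟪f' (x t), v t⟫ t := by
    intro t
    have := (hgrad (x t)).hasFDerivAt.comp_hasDerivAt t (hxt t)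
    simp at this; exact this
  have hEd : ∀ t, HasDerivAt E
      (((2 : ℝ) * t ^ 1) * (f (x t) - f xstar) + t ^ 2 * ⟪f' (x t), v t⟫
        + (1 / 2) * (⟪g t, (2 : ℝ) • v t + (t • a t + (1 : ℝ) • v t)⟫
            + ⟪(2 : ℝ) • v t + (t • a t + (1 : ℝ) • v t), g t⟫)
        + (α - 3) * (⟪x t - xstar, v t⟫ + ⟪v t, x t - xstar⟫)) t := by
    intro t
    exact (((hasDerivAt_pow 2 t).mul ((hft t).sub_const (f xstar))).add
        ((((hgt t).inner ℝ (hgt t))).const_mul (1/2))).add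
      (((((hxt t).sub_const xstar).inner ℝ ((hxt t).sub_const xstar)).const_mul (α - 3)))
  -- the derivative is nonpositive for t > 0
  have hderiv_nonpos : ∀ t ∈ Set.Ioi (0:ℝ), deriv E t ≤ 0 := by
    intro t ht
    have ht : (0:ℝ) < t := ht
    rw [(hEd t).deriv]
    have hat : a t = -((α / t) • v t) - f' (x t) := by
      have := hode t ht
      linear_combination (norm := module) this
    rw [hat]
    have key : ((2 : ℝ) * t ^ 1) * (f (x t) - f xstar) + t ^ 2 * ⟪f' (x t), v t⟫
        + (1 / 2) * (⟪g t, (2 : ℝ) • v t + (t • (-((α / t) • v t) - f' (x t)) + (1 : ℝ) • v t)⟫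
            + ⟪(2 : ℝ) • v t + (t • (-((α / t) • v t) - f' (x t)) + (1 : ℝ) • v t), g t⟫)
        + (α - 3) * (⟪x t - xstar, v t⟫ + ⟪v t, x t - xstar⟫)
        = 2 * t * (f (x t) - f xstar) - 2 * t * ⟪f' (x t), x t - xstar⟫
          + (3 - α) * t * ⟪v t, v t⟫ := by
      simp only [hg, inner_add_left, inner_add_right, inner_smul_left, inner_smul_right,
        inner_sub_left, inner_sub_right, inner_neg_left, inner_neg_right,
        RCLike.conj_to_real]
      rw [real_inner_comm (x t) (v t), real_inner_comm xstar (v t),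
        real_inner_comm (x t) (f' (x t)), real_inner_comm xstar (f' (x t)),
        real_inner_comm (v t) (f' (x t))]
      field_simp
      ring
    rw [key]
    have hcv : f (x t) - f xstar ≤ ⟪f' (x t), x t - xstar⟫ := by
      have := hconv (x t) xstar
      have h2 : ⟪f' (x t), xstar - x t⟫ = -⟪f' (x t), x t - xstar⟫ := by
        rw [← inner_neg_right]; congr 1; abel
      linarith [this, h2.le, h2.ge]
    have hr : (0:ℝ) ≤ ⟪v t, v t⟫ := real_inner_self_nonneg
    nlinarith [mul_pos ht ht, mul_nonneg ht.le hr]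
  -- E is antitone on [0, ∞)
  have hEanti : AntitoneOn E (Set.Ici 0) := by
    apply antitoneOn_of_deriv_nonpos (convex_Ici 0)
    · exact fun t _ => (hEd t).differentiableAt.continuousAt.continuousWithinAt
    · intro t _
      exact (hEd t).differentiableAt.differentiableWithinAt
    · rw [interior_Ici]
      exact hderiv_nonpos
  -- conclude
  intro t ht
  have hE0 : E 0 = (α - 1) * ‖x 0 - xstar‖ ^ 2 := by
    simp only [hE, hg, ne_eq, OfNat.ofNat_ne_zero, not_false_eq_true, zero_pow, zero_smul,
      add_zero, zero_mul, zero_add]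
    rw [real_inner_smul_left, real_inner_smul_right, real_inner_self_eq_norm_sq]
    ring
  have hmono := hEanti (Set.self_mem_Ici) (Set.mem_Ici.mpr ht.le) ht.le
  have hlower : t ^ 2 * (f (x t) - f xstar) ≤ E t := by
    have h1 : (0:ℝ) ≤ (1/2) * ⟪g t, g t⟫ :=
      mul_nonneg (by norm_num) real_inner_self_nonneg
    have h2 : (0:ℝ) ≤ (α - 3) * ⟪x t - xstar, x t - xstar⟫ :=
      mul_nonneg (by linarith) real_inner_self_nonneg
    simp only [hE]; linarith
  have ht2 : (0:ℝ) < t ^ 2 := by positivity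
  rw [le_div_iff₀ ht2, mul_comm]
  rw [hE0] at hmono
  linarith
end

section
/- Let f : H → ℝ be a β-strongly convex differentiable function on a real Hilbert space H with minimizer x*, where β > 0. Let x : [0,∞) → H be a C² curve satisfying ẍ(t) + 2√β ẋ(t) + ∇f(x(t)) = 0 with ẋ(0) = 0. Then for all t ≥ 0, f(x(t)) - f(x*) ≤ e^{-√β t} (f(x(0)) - f(x*) + (β/2)‖x(0) - x*‖²). -/
open scoped RealInnerProductSpace

theorem stmt_4 {H : Type*} [NormedAddCommGroup H] [InnerProductSpace ℝ H] [CompleteSpace H]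
    (β : ℝ) (hβ : 0 < β)
    (f : H → ℝ) (f' : H → H)
    (hgrad : ∀ y, HasGradientAt f (f' y) y)
    (hconv : ∀ y z : H, f y + ⟪f' y, z - y⟫ + (β / 2) * ‖z - y‖ ^ 2 ≤ f z)
    (xstar : H) (hmin : ∀ y, f xstar ≤ f y)
    (x : ℝ → H) (hx : ContDiff ℝ 2 x)
    (hode : ∀ t : ℝ,
      deriv (deriv x) t + (2 * Real.sqrt β) • deriv x t + f' (x t) = 0)
    (hv0 : deriv x 0 = 0) :
    ∀ t : ℝ, 0 ≤ t →
      f (x t) - f xstar ≤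
        Real.exp (-Real.sqrt β * t) *
          (f (x 0) - f xstar + (β / 2) * ‖x 0 - xstar‖ ^ 2) := by
  set b := Real.sqrt β with hbdef
  have hb : 0 < b := Real.sqrt_pos.mpr hβ
  have hb2 : b * b = β := Real.mul_self_sqrt hβ.le
  have hx1 : Differentiable ℝ x := hx.differentiable (by norm_num)
  have hx2 : Differentiable ℝ (deriv x) := by
    have h := (contDiff_succ_iff_deriv.mp (show ContDiff ℝ (1 + 1) x by exact_mod_cast hx)).2.2
    exact h.differentiable (by norm_num)
  set v : ℝ → H := fun t => b • (x t - xstar) + deriv x t with hvdef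
  set E : ℝ → ℝ := fun t => Real.exp (b * t) * (f (x t) - f xstar + (1/2) * ⟪v t, v t⟫)
    with hEdef
  -- derivative facts
  have hxd : ∀ t, HasDerivAt x (deriv x t) t := fun t => (hx1 t).hasDerivAt
  have hxdd : ∀ t, HasDerivAt (deriv x) (deriv (deriv x) t) t := fun t => (hx2 t).hasDerivAt
  have hodd : ∀ t, deriv (deriv x) t = -((2*b) • deriv x t) - f' (x t) := by
    intro t
    have h : deriv (deriv x) t + ((2*b) • deriv x t + f' (x t)) = 0 := by
      rw [← add_assoc]; exact hode t
    rw [add_eq_zero_iff_eq_neg] at h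
    rw [h]; module
  have hvd : ∀ t, HasDerivAt v (-(b • deriv x t) - f' (x t)) t := by
    intro t
    have h1 : HasDerivAt v (b • deriv x t + deriv (deriv x) t) t :=
      (((hxd t).sub_const xstar).const_smul b).add (hxdd t)
    have h2 : b • deriv x t + deriv (deriv x) t = -(b • deriv x t) - f' (x t) := by
      rw [hodd t]
      module
    rwa [h2] at h1
  have hfd : ∀ t, HasDerivAt (fun s => f (x s)) ⟪f' (x t), deriv x t⟫ t := by
    intro t
    have h := (hgrad (x t)).hasFDerivAt.comp_hasDerivAt t (hxd t)
    simp at h; exact h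
  have hEd : ∀ t, HasDerivAt E
      (b * Real.exp (b * t) * (f (x t) - f xstar + (1/2) * ⟪v t, v t⟫) +
       Real.exp (b * t) * (⟪f' (x t), deriv x t⟫ +
         (1/2) * (⟪v t, -(b • deriv x t) - f' (x t)⟫ + ⟪-(b • deriv x t) - f' (x t), v t⟫))) t := by
    intro t
    have hexp : HasDerivAt (fun s => Real.exp (b * s)) (b * Real.exp (b * t)) t := by
      have hlin : HasDerivAt (fun s : ℝ => b * s) b t := by
        simpa using (hasDerivAt_id t).const_mul b
      simpa [mul_comm] using hlin.exp
    have hin : HasDerivAt (fun s => ⟪v s, v s⟫)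
        (⟪v t, -(b • deriv x t) - f' (x t)⟫ + ⟪-(b • deriv x t) - f' (x t), v t⟫) t :=
      (hvd t).inner ℝ (hvd t)
    have := hexp.mul (((hfd t).sub_const (f xstar)).add (hin.const_mul (1/2)))
    convert this using 1 <;> rfl
  -- derivative of E is nonpositive
  have hE'le : ∀ t, deriv E t ≤ 0 := by
    intro t
    rw [(hEd t).deriv]
    set u := x t - xstar with hu
    set w := deriv x t with hw
    set g := f' (x t) with hg
    have hsc : f (x t) - f xstar + (β/2) * ⟪u, u⟫ ≤ ⟪g, u⟫ := by
      have h := hconv (x t) xstar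
      have h1 : ⟪g, xstar - x t⟫ = -⟪g, u⟫ := by
        rw [show xstar - x t = -u by simp [hu]]; simp
      have h2 : ‖xstar - x t‖ ^ 2 = ⟪u, u⟫ := by
        rw [norm_sub_rev, real_inner_self_eq_norm_sq]
      rw [h1, h2] at h
      linarith
    have e1 : ⟪v t, v t⟫ = b*b*⟪u,u⟫ + 2*b*⟪u,w⟫ + ⟪w,w⟫ := by
      simp only [hvdef, inner_add_left, inner_add_right, real_inner_smul_left,
        real_inner_smul_right, real_inner_comm w u]
      rw [← hu, ← hw, real_inner_comm w u]
      ring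
    have e2 : ⟪v t, -(b • w) - g⟫ = -(b*b*⟪u,w⟫) - b*⟪u,g⟫ - b*⟪w,w⟫ - ⟪w,g⟫ := by
      simp only [hvdef, inner_add_left, inner_sub_right, inner_neg_right,
        real_inner_smul_left, real_inner_smul_right]
      ring
    have e3 : ⟪-(b • w) - g, v t⟫ = -(b*b*⟪u,w⟫) - b*⟪u,g⟫ - b*⟪w,w⟫ - ⟪w,g⟫ := by
      rw [real_inner_comm]; exact e2
    have hww : (0:ℝ) ≤ ⟪w, w⟫ := real_inner_self_nonneg
    have hgw : ⟪g, w⟫ = ⟪w, g⟫ := real_inner_comm w g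
    have hgu : ⟪g, u⟫ = ⟪u, g⟫ := real_inner_comm u g
    have hexp : (0:ℝ) < Real.exp (b * t) := Real.exp_pos _
    have key : b * (f (x t) - f xstar + (1/2) * ⟪v t, v t⟫) +
        (⟪g, w⟫ + (1/2) * (⟪v t, -(b • w) - g⟫ + ⟪-(b • w) - g, v t⟫)) ≤ 0 := by
      rw [e1, e2, e3, hgw]
      have expand : b * (f (x t) - f xstar + (1/2) * (b*b*⟪u,u⟫ + 2*b*⟪u,w⟫ + ⟪w,w⟫)) +
          (⟪w, g⟫ + (1/2) * ((-(b*b*⟪u,w⟫) - b*⟪u,g⟫ - b*⟪w,w⟫ - ⟪w,g⟫) +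
            (-(b*b*⟪u,w⟫) - b*⟪u,g⟫ - b*⟪w,w⟫ - ⟪w,g⟫))) =
          b * ((f (x t) - f xstar + (β/2) * ⟪u,u⟫) - ⟪u,g⟫) - (b/2) * ⟪w,w⟫ := by
        rw [← hb2]; ring
      rw [expand]
      have h1 : (f (x t) - f xstar + (β/2) * ⟪u,u⟫) - ⟪u,g⟫ ≤ 0 := by
        rw [← hgu]; linarith
      nlinarith
    calc b * Real.exp (b * t) * (f (x t) - f xstar + (1/2) * ⟪v t, v t⟫) +
          Real.exp (b * t) * (⟪g, w⟫ +
            (1/2) * (⟪v t, -(b • w) - g⟫ + ⟪-(b • w) - g, v t⟫))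
        = Real.exp (b * t) * (b * (f (x t) - f xstar + (1/2) * ⟪v t, v t⟫) +
            (⟪g, w⟫ + (1/2) * (⟪v t, -(b • w) - g⟫ + ⟪-(b • w) - g, v t⟫))) := by ring
      _ ≤ 0 := mul_nonpos_of_nonneg_of_nonpos hexp.le key
  have hanti : Antitone E :=
    antitone_of_deriv_nonpos (fun t => (hEd t).differentiableAt) hE'le
  intro t ht
  have hEt : E t ≤ E 0 := hanti ht
  have hE0 : E 0 = f (x 0) - f xstar + (β/2) * ‖x 0 - xstar‖ ^ 2 := by
    have hv00 : v 0 = b • (x 0 - xstar) := by simp [hvdef, hv0]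
    have hvv0 : ⟪v 0, v 0⟫ = β * ‖x 0 - xstar‖ ^ 2 := by
      rw [hv00, real_inner_smul_left, real_inner_smul_right,
        real_inner_self_eq_norm_sq, ← mul_assoc, hb2]
    simp only [hEdef, hvv0, mul_zero, Real.exp_zero, one_mul]
    ring
  have hexpt : (0:ℝ) < Real.exp (-(b * t)) := Real.exp_pos _
  have hvv : (0:ℝ) ≤ ⟪v t, v t⟫ := real_inner_self_nonneg
  have hEinv : Real.exp (-(b * t)) * E t = f (x t) - f xstar + (1/2) * ⟪v t, v t⟫ := by
    rw [hEdef]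
    rw [show Real.exp (-(b*t)) * (Real.exp (b*t) * (f (x t) - f xstar + (1/2) * ⟪v t, v t⟫))
      = (Real.exp (-(b*t)) * Real.exp (b*t)) * (f (x t) - f xstar + (1/2) * ⟪v t, v t⟫) by ring]
    rw [← Real.exp_add]
    simp
  have h1 : f (x t) - f xstar ≤ Real.exp (-(b * t)) * E t := by
    rw [hEinv]; linarith
  have h2 : Real.exp (-(b * t)) * E t ≤ Real.exp (-(b * t)) * E 0 :=
    mul_le_mul_of_nonneg_left hEt hexpt.le
  rw [neg_mul]
  rw [hE0] at h2
  linarith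
end

section
/- Let f_1, ..., f_K : H → ℝ be convex differentiable functions on a real Hilbert space H, let x : [0,∞) → H be differentiable, and suppose ẋ(t) = -Σ_k w_k(t) ∇f_k(x(t)) where for each t, w(t) lies in the probability simplex and Σ_k w_k(t) ∇f_k(x(t)) is the minimal-norm element of conv{∇f_1(x(t)),...,∇f_K(x(t))}. Then for each k, the function t ↦ f_k(x(t)) is nonincreasing; in fact d/dt f_k(x(t)) ≤ -‖ẋ(t)‖². -/
open scoped RealInnerProductSpace

theorem stmt_9 {H : Type*} [NormedAddCommGroup H] [InnerProductSpace ℝ H] [CompleteSpace H]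
    (K : ℕ) (f : Fin K → H → ℝ) (f' : Fin K → H → H)
    (hgrad : ∀ k y, HasGradientAt (f k) (f' k y) y)
    (hconv : ∀ k, ∀ y z : H, f k y + ⟪f' k y, z - y⟫ ≤ f k z)
    (x : ℝ → H) (hx : Differentiable ℝ x)
    (w : ℝ → Fin K → ℝ)
    (hw : ∀ t, (∀ k, 0 ≤ w t k) ∧ ∑ k, w t k = 1)
    (hode : ∀ t, deriv x t = -∑ k, w t k • f' k (x t))
    (hminnorm : ∀ t, ∀ u ∈ convexHull ℝ (Set.range fun k => f' k (x t)),
      ‖∑ k, w t k • f' k (x t)‖ ≤ ‖u‖) :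
    ∀ k : Fin K,
      (∀ t, 0 ≤ t → deriv (fun s => f k (x s)) t ≤ -‖deriv x t‖ ^ 2) ∧
        AntitoneOn (fun t => f k (x t)) (Set.Ici 0) := by
  -- key inner product inequality
  have key : ∀ (k : Fin K) (t : ℝ),
      ‖∑ j, w t j • f' j (x t)‖ ^ 2 ≤ ⟪∑ j, w t j • f' j (x t), f' k (x t)⟫ := by
    intro k t
    set v := ∑ j, w t j • f' j (x t) with hv
    have hconvhull : Convex ℝ (convexHull ℝ (Set.range fun j => f' j (x t))) :=
      convex_convexHull ℝ _
    have hvmem : v ∈ convexHull ℝ (Set.range fun j => f' j (x t)) := by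
      apply hconvhull.sum_mem (fun j _ => (hw t).1 j) (hw t).2
      intro j _
      exact subset_convexHull ℝ _ ⟨j, rfl⟩
    have hiInf : ‖(0 : H) - v‖ = ⨅ u : (convexHull ℝ (Set.range fun j => f' j (x t))), ‖(0:H) - u‖ := by
      have hbdd : BddBelow (Set.range fun u : (convexHull ℝ (Set.range fun j => f' j (x t))) => ‖(0:H) - u‖) :=
        ⟨0, fun _ ⟨_, h⟩ => h ▸ norm_nonneg _⟩
      haveI : Nonempty ((convexHull ℝ (Set.range fun j => f' j (x t))) : Set H) := ⟨⟨v, hvmem⟩⟩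
      refine le_antisymm ?_ (ciInf_le hbdd ⟨v, hvmem⟩)
      refine le_ciInf fun u => ?_
      simp only [zero_sub, norm_neg]
      exact hminnorm t u u.2
    rw [norm_eq_iInf_iff_real_inner_le_zero hconvhull hvmem] at hiInf
    have h1 := hiInf (f' k (x t)) (subset_convexHull ℝ _ ⟨k, rfl⟩)
    have h2 : ⟪v, f' k (x t) - v⟫ ≥ 0 := by
      have : ⟪(0:H) - v, f' k (x t) - v⟫ = -⟪v, f' k (x t) - v⟫ := by
        rw [zero_sub, inner_neg_left]
      linarith [h1, this ▸ h1]
    have := inner_sub_right (𝕜 := ℝ) v (f' k (x t)) v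
    rw [real_inner_self_eq_norm_sq] at this
    linarith [this ▸ h2]
  intro k
  -- derivative formula
  have hderiv : ∀ t, HasDerivAt (fun s => f k (x s)) (-‖∑ j, w t j • f' j (x t)‖ ^ 2
      + (‖∑ j, w t j • f' j (x t)‖ ^ 2 - ⟪∑ j, w t j • f' j (x t), f' k (x t)⟫)) t := by
    intro t
    have hxd : HasDerivAt x (deriv x t) t := (hx t).hasDerivAt
    have hcomp := (hgrad k (x t)).hasFDerivAt.comp_hasDerivAt t hxd
    refine hcomp.congr_deriv ?_
    simp only [InnerProductSpace.toDual_apply_apply, hode t, inner_neg_right, real_inner_comm]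
    ring
  have hle : ∀ t, deriv (fun s => f k (x s)) t ≤ -‖deriv x t‖ ^ 2 := by
    intro t
    rw [(hderiv t).deriv, hode t, norm_neg]
    have := key k t
    linarith
  refine ⟨fun t _ => hle t, ?_⟩
  have hdiff : ∀ t, DifferentiableAt ℝ (fun s => f k (x s)) t := fun t => (hderiv t).differentiableAt
  apply antitoneOn_of_deriv_nonpos (convex_Ici 0)
  · exact (Differentiable.continuous fun t => hdiff t).continuousOn
  · exact fun t _ => (hdiff t).differentiableWithinAt
  · intro t _
    exact le_trans (hle t) (neg_nonpos.mpr (by positivity))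
end

section
/- Let f_1, ..., f_K : H → ℝ be convex differentiable functions on a real Hilbert space, and let x : [0,∞) → H solve ẋ(t) = -v(t), where v(t) is the minimal-norm element of conv{∇f_1(x(t)),...,∇f_K(x(t))}. Then for every q ∈ H and every t > 0, min_{k∈[K]} (f_k(x(t)) - f_k(q)) ≤ ‖x(0) - q‖² / (2t). -/
open scoped RealInnerProductSpace

theorem stmt_10 {H : Type*} [NormedAddCommGroup H] [InnerProductSpace ℝ H] [CompleteSpace H]
    (K : ℕ) [NeZero K] (f : Fin K → H → ℝ) (f' : Fin K → H → H)
    (hgrad : ∀ k y, HasGradientAt (f k) (f' k y) y)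
    (hconv : ∀ k, ∀ y z : H, f k y + ⟪f' k y, z - y⟫ ≤ f k z)
    (x : ℝ → H) (hx : Differentiable ℝ x)
    (w : ℝ → Fin K → ℝ)
    (hw : ∀ t, (∀ k, 0 ≤ w t k) ∧ ∑ k, w t k = 1)
    (hode : ∀ t, deriv x t = -∑ k, w t k • f' k (x t))
    (hminnorm : ∀ t, ∀ u ∈ convexHull ℝ (Set.range fun k => f' k (x t)),
      ‖∑ k, w t k • f' k (x t)‖ ≤ ‖u‖) :
    ∀ q : H, ∀ t > (0 : ℝ),
      Finset.univ.inf' Finset.univ_nonempty (fun k => f k (x t) - f k q) ≤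
        ‖x 0 - q‖ ^ 2 / (2 * t) := by
  intro q t ht
  set v : ℝ → H := fun s => ∑ k, w s k • f' k (x s) with hv
  -- v s belongs to the convex hull
  have hvmem : ∀ s, v s ∈ convexHull ℝ (Set.range fun k => f' k (x s)) := by
    intro s
    have h1 : Finset.univ.centerMass (w s) (fun k => f' k (x s)) ∈
        convexHull ℝ (Set.range fun k => f' k (x s)) := by
      apply Finset.centerMass_mem_convexHull
      · intro i _; exact (hw s).1 i
      · rw [(hw s).2]; norm_num
      · intro i _; exact ⟨i, rfl⟩
    rwa [Finset.centerMass, (hw s).2, inv_one, one_smul] at h1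
  -- key inner product inequality from minimal norm
  have hkey : ∀ s (k : Fin K), ‖v s‖ ^ 2 ≤ ⟪v s, f' k (x s)⟫ := by
    intro s k
    have humem : f' k (x s) ∈ convexHull ℝ (Set.range fun k => f' k (x s)) :=
      subset_convexHull ℝ _ ⟨k, rfl⟩
    set u := f' k (x s)
    -- for each θ ∈ (0,1], v + θ(u - v) in hull, hence norm larger
    have hstep : ∀ θ : ℝ, 0 < θ → θ ≤ 1 →
        0 ≤ 2 * ⟪v s, u - v s⟫ + θ * ‖u - v s‖ ^ 2 := by
      intro θ hθ0 hθ1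
      have hmem : v s + θ • (u - v s) ∈ convexHull ℝ (Set.range fun k => f' k (x s)) := by
        have := (convex_convexHull ℝ (Set.range fun k => f' k (x s)))
          (hvmem s) humem (a := 1 - θ) (b := θ) (by linarith) (le_of_lt hθ0) (by ring)
        convert this using 1
        simp [smul_sub, sub_smul]
        abel
      have hnorm : ‖v s‖ ≤ ‖v s + θ • (u - v s)‖ := hminnorm s _ hmem
      have hsq : ‖v s‖ ^ 2 ≤ ‖v s + θ • (u - v s)‖ ^ 2 := by
        apply pow_le_pow_left₀ (norm_nonneg _) hnorm
      rw [← real_inner_self_eq_norm_sq, ← real_inner_self_eq_norm_sq] at hsq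
      rw [← real_inner_self_eq_norm_sq]
      simp only [inner_add_add_self, inner_smul_left, inner_smul_right, RCLike.ofReal_real_eq_id,
        id, starRingEnd_apply, star_trivial] at hsq
      have hθne : θ ≠ 0 := ne_of_gt hθ0
      nlinarith [hsq, real_inner_comm (u - v s) (v s)]
    have hc : 0 ≤ ⟪v s, u - v s⟫ := by
      by_contra hneg
      push_neg at hneg
      set c := ⟪v s, u - v s⟫
      set d := ‖u - v s‖ ^ 2
      have hd : 0 ≤ d := sq_nonneg _
      have hθ : 0 < min 1 (-c / (d + 1)) := by
        apply lt_min one_pos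
        apply div_pos (by linarith) (by linarith)
      have := hstep _ hθ (min_le_left _ _)
      have h2 : min 1 (-c / (d + 1)) * d ≤ (-c / (d + 1)) * d := by
        apply mul_le_mul_of_nonneg_right (min_le_right _ _) hd
      have h3 : (-c / (d + 1)) * d ≤ -c := by
        rw [div_mul_eq_mul_div, div_le_iff₀ (by linarith)]
        nlinarith
      linarith
    have : ⟪v s, u - v s⟫ = ⟪v s, u⟫ - ‖v s‖ ^ 2 := by
      rw [inner_sub_right, real_inner_self_eq_norm_sq]
    linarith [hc, this ▸ hc]
  -- derivative of f k ∘ x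
  have hdf : ∀ (k : Fin K) (s : ℝ),
      HasDerivAt (fun τ => f k (x τ)) ⟪f' k (x s), deriv x s⟫ s := by
    intro k s
    have h1 := ((hgrad k (x s)).hasFDerivAt).comp_hasDerivAt s (hx s).hasDerivAt
    exact h1
  -- each f k ∘ x is antitone
  have hanti : ∀ (k : Fin K), Antitone (fun τ => f k (x τ)) := by
    intro k
    apply antitone_of_deriv_nonpos
    · intro s; exact (hdf k s).differentiableAt
    · intro s
      rw [(hdf k s).deriv, hode s]
      have : ⟪f' k (x s), -v s⟫ = -⟪v s, f' k (x s)⟫ := by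
        rw [inner_neg_right, real_inner_comm]
      rw [show (-∑ k, w s k • f' k (x s)) = -v s from rfl, this]
      have := hkey s k
      nlinarith [sq_nonneg ‖v s‖]
  set m : ℝ := Finset.univ.inf' Finset.univ_nonempty (fun k => f k (x t) - f k q) with hm
  -- key pointwise bound on [0, t]
  have hsum_bound : ∀ s ∈ Set.Icc (0:ℝ) t, m ≤ ∑ k, w s k * (f k (x s) - f k q) := by
    intro s hs
    have hle : ∀ k : Fin K, m ≤ f k (x s) - f k q := by
      intro k
      have h1 : m ≤ f k (x t) - f k q := Finset.inf'_le _ (Finset.mem_univ k)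
      have h2 : f k (x t) ≤ f k (x s) := hanti k hs.2
      linarith
    calc m = ∑ k, w s k * m := by rw [← Finset.sum_mul, (hw s).2, one_mul]
    _ ≤ ∑ k, w s k * (f k (x s) - f k q) := by
        apply Finset.sum_le_sum
        intro k _
        exact mul_le_mul_of_nonneg_left (hle k) ((hw s).1 k)
  -- energy function
  set G : ℝ → ℝ := fun s => ⟪x s - q, x s - q⟫ + s * (2 * m) with hG
  have hGd : ∀ s : ℝ, HasDerivAt G (2 * ⟪deriv x s, x s - q⟫ + 2 * m) s := by
    intro s
    have h1 : HasDerivAt (fun τ => x τ - q) (deriv x s) s := (hx s).hasDerivAt.sub_const q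
    have h2 := (h1.inner ℝ h1)
    have h3 : HasDerivAt (fun τ : ℝ => τ * (2 * m)) (2 * m) s := by
      simpa using (hasDerivAt_id s).mul_const (2 * m)
    have := h2.add h3
    exact this.congr_deriv (by rw [real_inner_comm (x s - q) (deriv x s)]; ring)
  have hGanti : AntitoneOn G (Set.Icc 0 t) := by
    apply antitoneOn_of_deriv_nonpos (convex_Icc 0 t)
    · exact fun s _ => (hGd s).continuousAt.continuousWithinAt
    · intro s _
      exact (hGd s).differentiableAt.differentiableWithinAt
    · intro s hs
      rw [interior_Icc] at hs
      rw [(hGd s).deriv]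
      have hode' := hode s
      have hinner : ⟪deriv x s, x s - q⟫ = -∑ k, w s k * ⟪f' k (x s), x s - q⟫ := by
        rw [hode']
        rw [inner_neg_left, sum_inner]
        congr 1
        apply Finset.sum_congr rfl
        intro k _
        rw [real_inner_smul_left]
      have hconvb : ∀ k : Fin K, f k (x s) - f k q ≤ ⟪f' k (x s), x s - q⟫ := by
        intro k
        have := hconv k (x s) q
        have h2 : ⟪f' k (x s), q - x s⟫ = -⟪f' k (x s), x s - q⟫ := by
          rw [← inner_neg_right]; congr 1; abel
        rw [h2] at this
        linarith
      have hsum2 : ∑ k, w s k * (f k (x s) - f k q) ≤ ∑ k, w s k * ⟪f' k (x s), x s - q⟫ := by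
        apply Finset.sum_le_sum
        intro k _
        exact mul_le_mul_of_nonneg_left (hconvb k) ((hw s).1 k)
      have hmb := hsum_bound s ⟨le_of_lt hs.1, le_of_lt hs.2⟩
      rw [hinner]
      linarith
  have hGt : G t ≤ G 0 := hGanti (Set.left_mem_Icc.2 (le_of_lt ht))
    ⟨le_of_lt ht, le_refl t⟩ (le_of_lt ht)
  have hG0 : G 0 = ‖x 0 - q‖ ^ 2 := by
    simp [hG, real_inner_self_eq_norm_sq]
  have hGtval : ‖x t - q‖ ^ 2 + t * (2 * m) = G t := by
    simp [hG, real_inner_self_eq_norm_sq]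
  have hnn : 0 ≤ ‖x t - q‖ ^ 2 := sq_nonneg _
  have h2t : (0:ℝ) < 2 * t := by linarith
  rw [le_div_iff₀ h2t]
  nlinarith [hGt, hG0.symm ▸ hGt, hGtval]
end

section
/- Let f : H → ℝ be a convex differentiable function on a real Hilbert space with minimizer x*, and let x be a C² solution of ẍ(t) + (α/t) ẋ(t) + ∇f(x(t)) = 0 with α ≥ 3. Define E(t) = t²(f(x(t)) - f(x*)) + (1/2)‖2(x(t) - x*) + t ẋ(t)‖² + (α - 3)‖x(t) - x*‖². Then E is nonincreasing on (0,∞). -/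
open scoped RealInnerProductSpace

theorem stmt_12 {H : Type*} [NormedAddCommGroup H] [InnerProductSpace ℝ H] [CompleteSpace H]
    (f : H → ℝ) (f' : H → H)
    (hgrad : ∀ y, HasGradientAt f (f' y) y)
    (hconv : ∀ y z : H, f y + ⟪f' y, z - y⟫ ≤ f z)
    (xstar : H) (hmin : ∀ y, f xstar ≤ f y)
    (α : ℝ) (hα : 3 ≤ α)
    (x : ℝ → H) (hx : ContDiff ℝ 2 x)
    (hode : ∀ t > (0 : ℝ), deriv (deriv x) t + (α / t) • deriv x t + f' (x t) = 0)
    (E : ℝ → ℝ)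
    (hE : ∀ t, E t = t ^ 2 * (f (x t) - f xstar)
        + (1 / 2) * ‖(2 : ℝ) • (x t - xstar) + t • deriv x t‖ ^ 2
        + (α - 3) * ‖x t - xstar‖ ^ 2) :
    AntitoneOn E (Set.Ioi 0) := by
  set v : ℝ → H := deriv x with hv
  set a : ℝ → H := deriv v with ha
  have hx2 : ContDiff ℝ ((1 : WithTop ℕ∞) + 1) x := by
    rw [show ((1 : WithTop ℕ∞) + 1) = 2 by norm_num]; exact hx
  obtain ⟨hxdiff, -, hvC⟩ := contDiff_succ_iff_deriv.mp hx2
  rw [← hv] at hvC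
  have hvdiff : Differentiable ℝ v := hvC.differentiable one_ne_zero
  -- rewrite E using inner products
  have hEfun : E = fun t => t ^ 2 * (f (x t) - f xstar)
      + (1 / 2) * ⟪(2 : ℝ) • (x t - xstar) + t • v t, (2 : ℝ) • (x t - xstar) + t • v t⟫
      + (α - 3) * ⟪x t - xstar, x t - xstar⟫ := by
    funext t
    rw [hE t, real_inner_self_eq_norm_sq, real_inner_self_eq_norm_sq]
  -- derivative of E at any t
  have hderiv : ∀ t : ℝ, HasDerivAt E
      (2 * t * (f (x t) - f xstar) + t ^ 2 * ⟪f' (x t), v t⟫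
        + (1 / 2) * (⟪(2 : ℝ) • (x t - xstar) + t • v t, (2 : ℝ) • v t + (t • a t + (1 : ℝ) • v t)⟫
            + ⟪(2 : ℝ) • v t + (t • a t + (1 : ℝ) • v t), (2 : ℝ) • (x t - xstar) + t • v t⟫)
        + (α - 3) * (⟪x t - xstar, v t⟫ + ⟪v t, x t - xstar⟫)) t := by
    intro t
    have hxd : HasDerivAt x (v t) t := (hxdiff t).hasDerivAt
    have hvd : HasDerivAt v (a t) t := (hvdiff t).hasDerivAt
    have hfx : HasDerivAt (fun s => f (x s)) ⟪f' (x t), v t⟫ t := by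
      have := (hgrad (x t)).hasFDerivAt.comp_hasDerivAt t hxd
      simpa [InnerProductSpace.toDual_apply_apply, Function.comp_def] using this
    have h1 : HasDerivAt (fun s : ℝ => s ^ 2 * (f (x s) - f xstar))
        (2 * t * (f (x t) - f xstar) + t ^ 2 * ⟪f' (x t), v t⟫) t := by
      have hp : HasDerivAt (fun s : ℝ => s ^ 2) (2 * t) t := by
        simpa using (hasDerivAt_pow 2 t)
      simpa [Pi.mul_def] using hp.mul (hfx.sub_const (f xstar))
    have hud : HasDerivAt (fun s => (2 : ℝ) • (x s - xstar) + s • v s)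
        ((2 : ℝ) • v t + (t • a t + (1 : ℝ) • v t)) t := by
      simpa [Pi.add_def, Pi.smul_def, Pi.smul_def'] using ((hxd.sub_const xstar).const_smul (2 : ℝ)).add ((hasDerivAt_id t).smul hvd)
    have h2 := (hud.inner ℝ hud)
    have h3 := ((hxd.sub_const xstar).inner ℝ (hxd.sub_const xstar))
    rw [hEfun]
    exact (h1.add (h2.const_mul (1 / 2 : ℝ))).add (h3.const_mul (α - 3))
  apply antitoneOn_of_deriv_nonpos (convex_Ioi 0)
  · exact fun t _ => ((hderiv t).differentiableAt).continuousAt.continuousWithinAt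
  · rw [interior_Ioi]; exact fun t _ => ((hderiv t).differentiableAt).differentiableWithinAt
  · rw [interior_Ioi]
    intro t ht
    rw [(hderiv t).deriv]
    have ht0 : t ≠ 0 := ne_of_gt ht
    -- substitute the ODE
    have htpos : (0 : ℝ) < t := ht
    have hodet : a t = -((α / t) • v t) - f' (x t) := by
      have h0 := hode t ht
      linear_combination (norm := module) h0
    have hta : t • a t = -(α • v t) - t • f' (x t) := by
      rw [hodet]; rw [smul_sub, smul_neg, smul_smul]
      field_simp
    -- compute the derivative expression
    have key : 2 * t * (f (x t) - f xstar) + t ^ 2 * ⟪f' (x t), v t⟫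
        + (1 / 2) * (⟪(2 : ℝ) • (x t - xstar) + t • v t, (2 : ℝ) • v t + (t • a t + (1 : ℝ) • v t)⟫
            + ⟪(2 : ℝ) • v t + (t • a t + (1 : ℝ) • v t), (2 : ℝ) • (x t - xstar) + t • v t⟫)
        + (α - 3) * (⟪x t - xstar, v t⟫ + ⟪v t, x t - xstar⟫)
        = 2 * t * (f (x t) - f xstar) - 2 * t * ⟪f' (x t), x t - xstar⟫
          + (3 - α) * (t * ⟪v t, v t⟫) := by
      rw [hta]
      simp only [inner_add_left, inner_add_right, inner_smul_left, inner_smul_right,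
        inner_sub_left, inner_sub_right, inner_neg_left, inner_neg_right, RCLike.ofReal_real_eq_id,
        id, conj_trivial]
      rw [real_inner_comm (v t) (x t), real_inner_comm (v t) xstar,
        real_inner_comm (v t) (f' (x t)), real_inner_comm (x t) (f' (x t)),
        real_inner_comm xstar (f' (x t))]
      ring
    rw [key]
    have hcv : f (x t) - f xstar ≤ ⟪f' (x t), x t - xstar⟫ := by
      have := hconv (x t) xstar
      have h2 : ⟪f' (x t), xstar - x t⟫ = -⟪f' (x t), x t - xstar⟫ := by
        rw [← inner_neg_right]; congr 1; abel
      rw [h2] at this; linarith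
    have hvv : (0 : ℝ) ≤ ⟪v t, v t⟫ := real_inner_self_nonneg
    nlinarith [mul_nonneg (sub_nonneg.2 hα) (mul_nonneg htpos.le hvv),
      mul_nonneg htpos.le (sub_nonneg.2 hcv)]
end

section
/- Let f : H → ℝ be β-strongly convex and differentiable on a real Hilbert space with minimizer x*, β > 0, and let x be a C² solution of ẍ(t) + 2√β ẋ(t) + ∇f(x(t)) = 0. Define E(t) = e^{√β t} ( f(x(t)) - f(x*) + (1/2)‖√β (x(t) - x*) + ẋ(t)‖² ). Then E is nonincreasing on [0,∞). -/
open scoped RealInnerProductSpace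

theorem stmt_13 {H : Type*} [NormedAddCommGroup H] [InnerProductSpace ℝ H] [CompleteSpace H]
    (β : ℝ) (hβ : 0 < β)
    (f : H → ℝ) (f' : H → H)
    (hgrad : ∀ y, HasGradientAt f (f' y) y)
    (hconv : ∀ y z : H, f y + ⟪f' y, z - y⟫ + (β / 2) * ‖z - y‖ ^ 2 ≤ f z)
    (xstar : H) (hmin : ∀ y, f xstar ≤ f y)
    (x : ℝ → H) (hx : ContDiff ℝ 2 x)
    (hode : ∀ t : ℝ,
      deriv (deriv x) t + (2 * Real.sqrt β) • deriv x t + f' (x t) = 0)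
    (E : ℝ → ℝ)
    (hE : ∀ t, E t = Real.exp (Real.sqrt β * t) *
        (f (x t) - f xstar
          + (1 / 2) * ‖Real.sqrt β • (x t - xstar) + deriv x t‖ ^ 2)) :
    AntitoneOn E (Set.Ici 0) := by
  set s := Real.sqrt β with hs
  have hs0 : 0 < s := Real.sqrt_pos.mpr hβ
  have hss : s * s = β := Real.mul_self_sqrt hβ.le
  -- differentiability of x and deriv x
  have hdx : Differentiable ℝ x ∧ Differentiable ℝ (deriv x) := by
    have h : ContDiff ℝ ((1:ℕ∞)+1) x := by exact_mod_cast hx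
    rw [contDiff_succ_iff_deriv] at h
    exact ⟨h.1, h.2.2.differentiable (by simp)⟩
  have hx1 : ∀ t, HasDerivAt x (deriv x t) t := fun t => (hdx.1 t).hasDerivAt
  have hx2 : ∀ t, HasDerivAt (deriv x) (deriv (deriv x) t) t :=
    fun t => (hdx.2 t).hasDerivAt
  set v : ℝ → H := fun t => s • (x t - xstar) + deriv x t with hv
  -- rewrite E via inner products
  have hEeq : E = fun t => Real.exp (s * t) *
      (f (x t) - f xstar + (1 / 2) * ⟪v t, v t⟫) := by
    funext t
    rw [hE t, real_inner_self_eq_norm_sq]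
  -- derivative of E
  have hv' : ∀ t, HasDerivAt v (s • deriv x t + deriv (deriv x) t) t := by
    intro t
    exact (((hx1 t).sub_const xstar).const_smul s).add (hx2 t)
  have hg : ∀ t, HasDerivAt (fun t => f (x t) - f xstar + (1 / 2) * ⟪v t, v t⟫)
      (⟪f' (x t), deriv x t⟫ +
        (1/2) * (⟪v t, s • deriv x t + deriv (deriv x) t⟫ +
          ⟪s • deriv x t + deriv (deriv x) t, v t⟫)) t := by
    intro t
    have h1 : HasDerivAt (fun t => f (x t)) ⟪f' (x t), deriv x t⟫ t := by
      have := (hasGradientAt_iff_hasFDerivAt.mp (hgrad (x t))).comp_hasDerivAt t (hx1 t)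
      simp at this
      exact this
    exact (h1.sub_const (f xstar)).add (((hv' t).inner ℝ (hv' t)).const_mul (1/2))
  have hE' : ∀ t, HasDerivAt E
      (s * Real.exp (s * t) * (f (x t) - f xstar + (1 / 2) * ⟪v t, v t⟫) +
        Real.exp (s * t) * (⟪f' (x t), deriv x t⟫ +
        (1/2) * (⟪v t, s • deriv x t + deriv (deriv x) t⟫ +
          ⟪s • deriv x t + deriv (deriv x) t, v t⟫))) t := by
    intro t
    rw [hEeq]
    have h0 : HasDerivAt (fun u : ℝ => s * u) s t := by
      simpa using (hasDerivAt_id t).const_mul s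
    have hexp := h0.exp
    rw [mul_comm] at hexp
    exact hexp.mul (hg t)
  -- derivative is nonpositive
  have hle : ∀ t, (s * Real.exp (s * t) * (f (x t) - f xstar + (1 / 2) * ⟪v t, v t⟫) +
        Real.exp (s * t) * (⟪f' (x t), deriv x t⟫ +
        (1/2) * (⟪v t, s • deriv x t + deriv (deriv x) t⟫ +
          ⟪s • deriv x t + deriv (deriv x) t, v t⟫))) ≤ 0 := by
    intro t
    have hode' : deriv (deriv x) t = -((2*s) • deriv x t) - f' (x t) := by
      have := hode t
      have : deriv (deriv x) t + (2 * s) • deriv x t + f' (x t) = 0 := this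
      abel_nf at this ⊢
      linear_combination (norm := abel) this
    set a := x t - xstar with ha
    set u := deriv x t with hu
    set p := f' (x t) with hp
    have hconv' : f (x t) - f xstar + (β/2) * ⟪a, a⟫ - ⟪a, p⟫ ≤ 0 := by
      have := hconv (x t) xstar
      have h2 : ⟪p, xstar - x t⟫ = -⟪a, p⟫ := by
        rw [real_inner_comm, show xstar - x t = -a by simp [ha], inner_neg_left]
      have h3 : ‖xstar - x t‖^2 = ⟪a, a⟫ := by
        rw [show xstar - x t = -a by simp [ha], ← real_inner_self_eq_norm_sq]
        simp
      rw [h2, h3] at this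
      linarith
    have huu : (0:ℝ) ≤ ⟪u, u⟫ := real_inner_self_nonneg
    have hexp : (0:ℝ) < Real.exp (s * t) := Real.exp_pos _
    have key : s * (f (x t) - f xstar + (1 / 2) * ⟪v t, v t⟫) +
        (⟪p, u⟫ + (1/2) * (⟪v t, s • u + deriv (deriv x) t⟫ +
          ⟪s • u + deriv (deriv x) t, v t⟫)) ≤ 0 := by
      rw [hode']
      have hvt : v t = s • a + u := rfl
      rw [hvt]
      simp only [inner_add_left, inner_add_right, inner_smul_left, inner_smul_right,
        inner_neg_left, inner_neg_right, inner_sub_left, inner_sub_right,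
        RCLike.conj_to_real]
      have h1 : ⟪a, u⟫ = ⟪u, a⟫ := real_inner_comm u a
      have h2 : ⟪a, p⟫ = ⟪p, a⟫ := real_inner_comm p a
      have h3 : ⟪u, p⟫ = ⟪p, u⟫ := real_inner_comm p u
      rw [h1, h2, h3]
      rw [h2, ← hss] at hconv'
      have h4 : s * (f (x t) - f xstar + s * s / 2 * ⟪a, a⟫ - ⟪p, a⟫) ≤ 0 :=
        mul_nonpos_iff.mpr (Or.inl ⟨hs0.le, hconv'⟩)
      have h5 : (0:ℝ) ≤ (s/2) * ⟪u, u⟫ := by positivity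
      have heq : s * (f (x t) - f xstar + 1 / 2 * (s * (s * ⟪a, a⟫ + ⟪u, a⟫) + (s * ⟪u, a⟫ + ⟪u, u⟫))) +
          (⟪p, u⟫ + 1 / 2 *
            (s * (s * ⟪u, a⟫ + ⟪u, u⟫) + (-(2 * s * (s * ⟪u, a⟫ + ⟪u, u⟫)) - (s * ⟪p, a⟫ + ⟪p, u⟫)) +
              (s * (s * ⟪u, a⟫ + (-(2 * s * ⟪u, a⟫) - ⟪p, a⟫)) +
                (s * ⟪u, u⟫ + (-(2 * s * ⟪u, u⟫) - ⟪p, u⟫)))))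
          = s * (f (x t) - f xstar + s * s / 2 * ⟪a, a⟫ - ⟪p, a⟫) - (s/2) * ⟪u, u⟫ := by
        ring
      linarith [h4, h5, heq]
    calc s * Real.exp (s * t) * (f (x t) - f xstar + (1 / 2) * ⟪v t, v t⟫) +
        Real.exp (s * t) * (⟪p, u⟫ + (1/2) * (⟪v t, s • u + deriv (deriv x) t⟫ +
          ⟪s • u + deriv (deriv x) t, v t⟫))
        = Real.exp (s * t) * (s * (f (x t) - f xstar + (1 / 2) * ⟪v t, v t⟫) +
          (⟪p, u⟫ + (1/2) * (⟪v t, s • u + deriv (deriv x) t⟫ +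
          ⟪s • u + deriv (deriv x) t, v t⟫))) := by ring
      _ ≤ 0 := mul_nonpos_of_nonneg_of_nonpos hexp.le key
  have : Antitone E := by
    apply antitone_of_deriv_nonpos
    · exact fun t => ((hE' t).differentiableAt)
    · intro t
      rw [(hE' t).deriv]
      exact hle t
  exact this.antitoneOn _
end
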